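/- A finitely generated algebra over ℤ/m (m ≥ 1) of Krull dimension 0 is a finite ring. -/

import Mathlib

-- aux lemma: if a^i ≡ a^j mod every minimal prime, i < j, then a integral
theorem integral_aux0 {R A : Type*} [CommRing R] [CommRing A] [Algebra R A] [Nontrivial A]
    (a : A) (i j : ℕ) (hlt : i < j)
    (h : ∀ p : minimalPrimes A, Ideal.Quotient.mk (p : Ideal A) (a ^ i)
        = Ideal.Quotient.mk (p : Ideal A) (a ^ j)) :
    IsIntegral R a := by
  have hnil : a ^ j - a ^ i ∈ nilradical A := by
    rw [nilradical_eq_sInf, Submodule.mem_sInf]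
    intro q hq
    haveI : Ideal.IsPrime q := hq
    obtain ⟨p, hp, hpq⟩ := Ideal.exists_minimalPrimes_le (I := (⊥ : Ideal A)) (J := q) bot_le
    have := (Ideal.Quotient.eq (I := p)).mp (h ⟨p, hp⟩).symm
    exact hpq this
  obtain ⟨k, hk⟩ := hnil
  refine ⟨((Polynomial.X ^ j - Polynomial.X ^ i) ^ (k + 1) : Polynomial R), ?_, ?_⟩
  · exact (Polynomial.monic_X_pow_sub
      (lt_of_le_of_lt (Polynomial.degree_X_pow_le i) (by exact_mod_cast hlt))).pow _
  · have : Polynomial.aeval a (((Polynomial.X : Polynomial R) ^ j - Polynomial.X ^ i) ^ (k + 1))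
        = (a ^ j - a ^ i) ^ (k + 1) := by
      simp [map_pow, map_sub]
    rw [← Polynomial.aeval_def, this, pow_succ, hk, zero_mul]

/-- A finitely generated algebra over `ℤ/m` (`m ≥ 1`) of Krull dimension `0` is a finite ring. -/
theorem stmt6 (m : ℕ) (hm : 1 ≤ m) (A : Type*) [CommRing A] [Algebra (ZMod m) A]
    (hfg : Algebra.FiniteType (ZMod m) A) (hdim : ringKrullDim A = 0) :
    Finite A := by
  haveI : NeZero m := ⟨Nat.one_le_iff_ne_zero.mp hm⟩
  haveI := hfg
  haveI : IsNoetherianRing A := Algebra.FiniteType.isNoetherianRing (ZMod m) A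
  haveI : IsArtinianRing (ZMod m) := isArtinian_of_finite
  haveI : IsJacobsonRing (ZMod m) := isJacobsonRing_iff_prime_eq.mpr fun {P} hP => by
    haveI := hP
    haveI : P.IsMaximal := IsArtinianRing.isMaximal_of_isPrime P
    exact Ideal.jacobson_eq_self_of_isMaximal
  haveI : IsJacobsonRing A := isJacobsonRing_of_finiteType (A := ZMod m)
  rcases subsingleton_or_nontrivial A with h | h
  · exact Finite.of_subsingleton
  -- any two comparable primes are equal
  have hueq : ∀ p q : PrimeSpectrum A, p ≤ q → p = q := by
    intro p q hpq
    by_contra hne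
    have hlt : p < q := lt_of_le_of_ne hpq hne
    have h1 : Order.height q ≤ (0 : WithBot ℕ∞) := hdim ▸ Order.height_le_krullDim q
    have h2 : Order.height q = 0 := le_antisymm (by exact_mod_cast h1) zero_le
    exact absurd ((Order.height_eq_zero.mp h2).eq_of_ge hlt.le).symm hne
  -- every prime is maximal
  have hmax : ∀ (p : Ideal A), p.IsPrime → p.IsMaximal := by
    intro p hp
    obtain ⟨M, hM, hpM⟩ := p.exists_le_maximal hp.ne_top
    have heq := hueq ⟨p, hp⟩ ⟨M, hM.isPrime⟩ hpM
    rw [PrimeSpectrum.mk.injEq] at heq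
    exact heq ▸ hM
  -- quotients by primes are finite
  have hfinq : ∀ (p : Ideal A), p.IsPrime → Finite (A ⧸ p) := by
    intro p hp
    haveI := hp
    haveI : p.IsMaximal := hmax p hp
    letI : Field (A ⧸ p) := Ideal.Quotient.field p
    haveI : Algebra.FiniteType (ZMod m) (A ⧸ p) :=
      hfg.of_surjective (Ideal.Quotient.mkₐ (ZMod m) p) (Ideal.Quotient.mkₐ_surjective _ _)
    haveI : Module.Finite (ZMod m) (A ⧸ p) :=
      finite_of_finite_type_of_isJacobsonRing (ZMod m) (A ⧸ p)
    exact Module.finite_of_finite (ZMod m)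
  -- finitely many minimal primes
  have hSfin : (minimalPrimes A).Finite := minimalPrimes.finite_of_isNoetherianRing A
  haveI : Finite (minimalPrimes A) := hSfin
  -- every element is integral over ZMod m
  have hint : ∀ a : A, IsIntegral (ZMod m) a := by
    intro a
    haveI : ∀ p : minimalPrimes A, Finite (A ⧸ (p : Ideal A)) :=
      fun p => hfinq p.1 p.2.1.1
    have := Finite.exists_ne_map_eq_of_infinite
      (fun n : ℕ => fun p : minimalPrimes A => Ideal.Quotient.mk (p : Ideal A) (a ^ n))
    obtain ⟨i, j, hij, hfe⟩ := this
    -- wlog i < j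
    rcases hij.lt_or_gt with hlt | hlt
    case _ => exact integral_aux0 a i j hlt (fun p => congrFun hfe p)
    case _ => exact integral_aux0 a j i hlt (fun p => (congrFun hfe p).symm)
  haveI : Algebra.IsIntegral (ZMod m) A := ⟨hint⟩
  haveI : Module.Finite (ZMod m) A := Algebra.IsIntegral.finite
  exact Module.finite_of_finite (ZMod m)
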